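/- Let x : ℝ → ℝ³ be a unit-speed spacelike curve on an oriented timelike surface in Minkowski 3-space, whose Darboux frame satisfies the constant-coefficient equations T' = k_g g − ε k_n n, g' = k_g T + ε τ_g n, n' = k_n T + τ_g g with constants k_g, k_n, τ_g and ε = ⟨T,T⟩ = ±1. Then x is periodic of period ω > 0 if and only if τ_g = 0, ε k_n² − k_g² > 0, and √(ε k_n² − k_g²) = 2kπ/ω for some positive integer k. -/

import Mathlib

open Matrix Real MeasureTheory intervalIntegral

set_option maxHeartbeats 1000000



private lemma constFun {f : ℝ → ℝ} (h : ∀ t, HasDerivAt f 0 t) (t : ℝ) : f t = f 0 :=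
  is_const_of_deriv_eq_zero (fun s => (h s).differentiableAt) (fun s => (h s).deriv) t 0

private lemma hd_lin (μ t : ℝ) : HasDerivAt (fun t : ℝ => μ * t) μ t := by
  simpa using (hasDerivAt_id t).const_mul μ

private lemma hd_sin (μ t : ℝ) : HasDerivAt (fun t => Real.sin (μ * t)) (μ * Real.cos (μ * t)) t := by
  simpa [mul_comm] using (hd_lin μ t).sin

private lemma hd_cos (μ t : ℝ) : HasDerivAt (fun t => Real.cos (μ * t)) (-(μ * Real.sin (μ * t))) t := by
  simpa [mul_comm] using (hd_lin μ t).cos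

private lemma hd_exp (μ t : ℝ) : HasDerivAt (fun t => Real.exp (μ * t)) (μ * Real.exp (μ * t)) t := by
  simpa [mul_comm] using (hd_lin μ t).exp

/-- first-order linear ODE -/
private lemma ode1 {c : ℝ} {a : ℝ → ℝ} (h : ∀ t, HasDerivAt a (c * a t) t) :
    ∀ t, a t = a 0 * Real.exp (c * t) := by
  intro t
  have key : ∀ s, HasDerivAt (fun t => a t * Real.exp (-c * t)) 0 s := by
    intro s
    have := (h s).fun_mul (hd_exp (-c) s)
    convert this using 1 <;> try first | with_reducible_and_instances rfl | (funext x; rfl)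
    ring
  have h2 := constFun key t
  simp only [neg_mul, Real.exp_neg] at h2 ⊢
  field_simp at h2 ⊢
  rw [mul_zero, Real.exp_zero, mul_one] at h2
  linarith [h2]

/-- harmonic oscillator uniqueness: y'' = -μ²y -/
private lemma ode_harmonic {μ : ℝ} (hμ : μ ≠ 0) {y y' : ℝ → ℝ}
    (h1 : ∀ t, HasDerivAt y (y' t) t)
    (h2 : ∀ t, HasDerivAt y' (-(μ ^ 2) * y t) t) :
    ∀ t, y t = y 0 * Real.cos (μ * t) + (y' 0 / μ) * Real.sin (μ * t) := by
  set g : ℝ → ℝ := fun t => y t - (y 0 * Real.cos (μ * t) + (y' 0 / μ) * Real.sin (μ * t)) with hg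
  set g' : ℝ → ℝ := fun t => y' t - (-(y 0 * μ) * Real.sin (μ * t) + y' 0 * Real.cos (μ * t)) with hg'
  have hdg : ∀ t, HasDerivAt g (g' t) t := by
    intro t
    have := (h1 t).fun_sub (((hd_cos μ t).const_mul (y 0)).fun_add ((hd_sin μ t).const_mul (y' 0 / μ)))
    convert this using 1 <;> try first | with_reducible_and_instances rfl | (funext x; rfl)
    field_simp
    ring
  have hdg' : ∀ t, HasDerivAt g' (-(μ ^ 2) * g t) t := by
    intro t
    have := (h2 t).fun_sub (((hd_sin μ t).const_mul (-(y 0 * μ))).fun_add ((hd_cos μ t).const_mul (y' 0)))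
    convert this using 1 <;> try first | with_reducible_and_instances rfl | (funext x; rfl)
    simp only [hg]
    field_simp
    ring
  have hE : ∀ t, HasDerivAt (fun t => μ ^ 2 * g t ^ 2 + g' t ^ 2) 0 t := by
    intro t
    have hgsq : HasDerivAt (fun t => g t ^ 2) (2 * g t * g' t) t := by
      simpa [pow_two, mul_comm, mul_assoc, two_mul, add_mul] using (hdg t).fun_mul (hdg t)
    have hg'sq : HasDerivAt (fun t => g' t ^ 2) (2 * g' t * (-(μ ^ 2) * g t)) t := by
      have := (hdg' t).fun_mul (hdg' t)
      have h2 : HasDerivAt (fun t => g' t * g' t) (2 * g' t * (-(μ ^ 2) * g t)) t := by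
        convert this using 1 <;> (try first | with_reducible_and_instances rfl | (funext x; rfl)) <;> ring
      simpa [pow_two] using h2
    have := (hgsq.const_mul (μ ^ 2)).fun_add hg'sq
    convert this using 1 <;> try first | with_reducible_and_instances rfl | (funext x; rfl)
    ring
  intro t
  have hE0 : μ ^ 2 * g t ^ 2 + g' t ^ 2 = μ ^ 2 * g 0 ^ 2 + g' 0 ^ 2 := constFun hE t
  have hg0 : g 0 = 0 := by simp [hg]
  have hg'0 : g' 0 = 0 := by simp [hg']
  rw [hg0, hg'0] at hE0
  norm_num at hE0
  have hμ2 : 0 < μ ^ 2 := by positivity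
  have hsq : g t ^ 2 = 0 := by nlinarith [sq_nonneg (g t), sq_nonneg (g' t)]
  have : g t = 0 := by
    have := pow_eq_zero_iff (n := 2) (by norm_num) |>.mp hsq
    exact this
  simpa [hg, sub_eq_zero] using this

/-- hyperbolic case: y'' = μ²y -/
private lemma ode_hyperbolic {μ : ℝ} (hμ : μ ≠ 0) {y y' : ℝ → ℝ}
    (h1 : ∀ t, HasDerivAt y (y' t) t)
    (h2 : ∀ t, HasDerivAt y' (μ ^ 2 * y t) t) :
    ∃ c₁ c₂ : ℝ, ∀ t, y t = c₁ * Real.exp (μ * t) + c₂ * Real.exp (-μ * t) := by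
  have ha : ∀ t, HasDerivAt (fun t => y' t - μ * y t) (-μ * (y' t - μ * y t)) t := by
    intro t
    have := (h2 t).fun_sub ((h1 t).const_mul μ)
    convert this using 1 <;> (try first | with_reducible_and_instances rfl | (funext x; rfl)) <;> ring
  have hb : ∀ t, HasDerivAt (fun t => y' t + μ * y t) (μ * (y' t + μ * y t)) t := by
    intro t
    have := (h2 t).fun_add ((h1 t).const_mul μ)
    convert this using 1 <;> (try first | with_reducible_and_instances rfl | (funext x; rfl)) <;> ring
  have haf := ode1 ha
  have hbf := ode1 hb
  refine ⟨(y' 0 + μ * y 0) / (2 * μ), -(y' 0 - μ * y 0) / (2 * μ), fun t => ?_⟩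
  have h3 := haf t
  have h4 := hbf t
  try simp only at h3 h4
  have h2μ : (2 * μ) ≠ 0 := by simpa using hμ
  field_simp
  ring_nf
  ring_nf at h3 h4
  linarith [h3, h4]


private lemma extract_trig {μ α β γ : ℝ} (hμ : μ ≠ 0)
    (h : ∀ s : ℝ, α + β * Real.cos (μ * s) + γ * Real.sin (μ * s) = 0) :
    α = 0 ∧ β = 0 ∧ γ = 0 := by
  have h0 := h 0
  have h1 := h (π / μ)
  have h2 := h (π / (2 * μ))
  rw [mul_div_cancel₀ _ hμ] at h1
  have e2 : μ * (π / (2 * μ)) = π / 2 := by field_simp; try ring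
  rw [e2] at h2
  simp [Real.cos_pi, Real.sin_pi, Real.cos_pi_div_two, Real.sin_pi_div_two] at h0 h1 h2
  refine ⟨by linarith, by linarith, by linarith⟩

private lemma extract_exp {μ α β γ : ℝ} (hμ : μ ≠ 0)
    (h : ∀ s : ℝ, α + β * Real.exp (μ * s) + γ * Real.exp (-(μ * s)) = 0) :
    α = 0 ∧ β = 0 ∧ γ = 0 := by
  have h0 := h 0
  have h1 := h (Real.log 2 / μ)
  have h2 := h (2 * Real.log 2 / μ)
  have e1 : μ * (Real.log 2 / μ) = Real.log 2 := mul_div_cancel₀ _ hμ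
  have e2 : μ * (2 * Real.log 2 / μ) = Real.log 2 + Real.log 2 := by field_simp; ring
  rw [e1] at h1
  rw [e2] at h2
  have hl2 : Real.exp (Real.log 2) = 2 := Real.exp_log (by norm_num)
  rw [Real.exp_neg, hl2] at h1
  rw [Real.exp_add, Real.exp_neg, Real.exp_add, hl2] at h2
  simp at h0
  norm_num at h1 h2
  refine ⟨by linarith, by linarith, by linarith⟩

private lemma extract_quad {a b c : ℝ}
    (h : ∀ s : ℝ, a + b * s + c * s ^ 2 = 0) : a = 0 ∧ b = 0 ∧ c = 0 := by
  have h0 := h 0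
  have h1 := h 1
  have h2 := h (-1)
  norm_num at h0 h1 h2
  refine ⟨h0, by linarith, by linarith⟩

private lemma cont_of_deriv {u : ℝ → ℝ} {y : ℝ → ℝ} (hu : ∀ t, HasDerivAt u (y t) t) :
    Continuous u :=
  continuous_iff_continuousAt.mpr fun t => (hu t).continuousAt

private lemma my_ftc {u H : ℝ → ℝ} (hcont : Continuous u)
    (hH : ∀ t, HasDerivAt H (u t) t) (a b : ℝ) :
    ∫ t in a..b, u t = H b - H a :=
  integral_eq_sub_of_hasDerivAt (fun t _ => hH t) (hcont.intervalIntegrable a b)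

private lemma sol_pos {μ : ℝ} (hμ0 : 0 < μ) {u y y' : ℝ → ℝ}
    (hu : ∀ t, HasDerivAt u (y t) t)
    (hy : ∀ t, HasDerivAt y (y' t) t)
    (hy' : ∀ t, HasDerivAt y' (-(μ ^ 2) * y t) t) (s ω : ℝ) :
    ∫ t in s..(s + ω), u t =
      (u 0 + y' 0 / μ ^ 2) * ω
      - (y 0 / μ ^ 2) * (Real.cos (μ * s + μ * ω) - Real.cos (μ * s))
      - (y' 0 / μ ^ 3) * (Real.sin (μ * s + μ * ω) - Real.sin (μ * s)) := by
  have hμ : μ ≠ 0 := ne_of_gt hμ0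
  have hsol := ode_harmonic hμ hy hy'
  have hφ : ∀ t, u t = (u 0 + y' 0 / μ ^ 2) + (y 0 / μ) * Real.sin (μ * t)
      - (y' 0 / μ ^ 2) * Real.cos (μ * t) := by
    have hd : ∀ t, HasDerivAt (fun t => u t - ((u 0 + y' 0 / μ ^ 2)
        + (y 0 / μ) * Real.sin (μ * t) - (y' 0 / μ ^ 2) * Real.cos (μ * t))) 0 t := by
      intro t
      have hrhs : HasDerivAt (fun t => (u 0 + y' 0 / μ ^ 2) + (y 0 / μ) * Real.sin (μ * t)
          - (y' 0 / μ ^ 2) * Real.cos (μ * t)) (y t) t := by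
        have h1 := ((hasDerivAt_const t (u 0 + y' 0 / μ ^ 2)).fun_add
          ((hd_sin μ t).const_mul (y 0 / μ))).fun_sub ((hd_cos μ t).const_mul (y' 0 / μ ^ 2))
        convert h1 using 1 <;> try first | with_reducible_and_instances rfl | (funext x; rfl)
        rw [hsol t]
        field_simp
        ring
      simpa using (hu t).fun_sub hrhs
    intro t
    have h2 := constFun hd t
    simp only [Real.sin_zero, Real.cos_zero, mul_zero, mul_one] at h2
    linarith [h2]
  have hHd : ∀ t, HasDerivAt (fun t => (u 0 + y' 0 / μ ^ 2) * t
      - (y 0 / μ ^ 2) * Real.cos (μ * t) - (y' 0 / μ ^ 3) * Real.sin (μ * t)) (u t) t := by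
    intro t
    have h1 := (((hasDerivAt_id t).const_mul (u 0 + y' 0 / μ ^ 2)).fun_sub
      ((hd_cos μ t).const_mul (y 0 / μ ^ 2))).fun_sub ((hd_sin μ t).const_mul (y' 0 / μ ^ 3))
    convert h1 using 1 <;> try first | with_reducible_and_instances rfl | (funext x; rfl)
    rw [hφ t]
    field_simp
    ring
  rw [my_ftc (cont_of_deriv hu) hHd s (s + ω)]
  have h3 : μ * (s + ω) = μ * s + μ * ω := by ring
  rw [h3]
  ring

private lemma sol_neg {μ : ℝ} (hμ0 : 0 < μ) {u y y' : ℝ → ℝ}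
    (hu : ∀ t, HasDerivAt u (y t) t)
    (hy : ∀ t, HasDerivAt y (y' t) t)
    (hy' : ∀ t, HasDerivAt y' (μ ^ 2 * y t) t) :
    ∃ c₁ c₂ : ℝ, ∀ s ω : ℝ, ∫ t in s..(s + ω), u t =
      (u 0 - c₁ / μ + c₂ / μ) * ω
      + (c₁ / μ ^ 2) * ((Real.exp (μ * ω) - 1) * Real.exp (μ * s))
      + (c₂ / μ ^ 2) * ((Real.exp (-(μ * ω)) - 1) * Real.exp (-(μ * s))) := by
  have hμ : μ ≠ 0 := ne_of_gt hμ0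
  obtain ⟨c₁, c₂, hsol⟩ := ode_hyperbolic hμ hy hy'
  refine ⟨c₁, c₂, fun s ω => ?_⟩
  have hφ : ∀ t, u t = (u 0 - c₁ / μ + c₂ / μ) + (c₁ / μ) * Real.exp (μ * t)
      - (c₂ / μ) * Real.exp (-(μ * t)) := by
    have hd : ∀ t, HasDerivAt (fun t => u t - ((u 0 - c₁ / μ + c₂ / μ)
        + (c₁ / μ) * Real.exp (μ * t) - (c₂ / μ) * Real.exp (-(μ * t)))) 0 t := by
      intro t
      have hrhs : HasDerivAt (fun t => (u 0 - c₁ / μ + c₂ / μ) + (c₁ / μ) * Real.exp (μ * t)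
          - (c₂ / μ) * Real.exp (-(μ * t))) (y t) t := by
        have h1 := ((hasDerivAt_const t (u 0 - c₁ / μ + c₂ / μ)).fun_add
          ((hd_exp μ t).const_mul (c₁ / μ))).fun_sub ((hd_exp (-μ) t).const_mul (c₂ / μ))
        have h2 : ∀ t : ℝ, -μ * t = -(μ * t) := fun t => by ring
        simp only [h2] at h1
        convert h1 using 1 <;> try first | with_reducible_and_instances rfl | (funext x; rfl)
        rw [hsol t]
        simp only [h2]
        field_simp
        ring
      simpa using (hu t).fun_sub hrhs
    intro t
    have h2 := constFun hd t
    simp only [mul_zero, neg_zero, Real.exp_zero, mul_one] at h2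
    linarith [h2]
  have hHd : ∀ t, HasDerivAt (fun t => (u 0 - c₁ / μ + c₂ / μ) * t
      + (c₁ / μ ^ 2) * Real.exp (μ * t) + (c₂ / μ ^ 2) * Real.exp (-(μ * t))) (u t) t := by
    intro t
    have h1 := (((hasDerivAt_id t).const_mul (u 0 - c₁ / μ + c₂ / μ)).fun_add
      ((hd_exp μ t).const_mul (c₁ / μ ^ 2))).fun_add ((hd_exp (-μ) t).const_mul (c₂ / μ ^ 2))
    have h2 : ∀ t : ℝ, -μ * t = -(μ * t) := fun t => by ring
    simp only [h2] at h1
    convert h1 using 1 <;> try first | with_reducible_and_instances rfl | (funext x; rfl)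
    rw [hφ t]
    field_simp
    ring
  rw [my_ftc (cont_of_deriv hu) hHd s (s + ω)]
  have h3 : μ * (s + ω) = μ * s + μ * ω := by ring
  rw [h3]
  have h4 : -(μ * s + μ * ω) = -(μ * s) + -(μ * ω) := by ring
  rw [h4, Real.exp_add, Real.exp_add]
  ring

private lemma sol_zero {u y y' : ℝ → ℝ}
    (hu : ∀ t, HasDerivAt u (y t) t)
    (hy : ∀ t, HasDerivAt y (y' t) t)
    (hy' : ∀ t, HasDerivAt y' 0 t) (s ω : ℝ) :
    ∫ t in s..(s + ω), u t =
      u 0 * ω + y 0 * ((s + ω) ^ 2 - s ^ 2) / 2 + y' 0 * ((s + ω) ^ 3 - s ^ 3) / 6 := by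
  have hc : ∀ t, y' t = y' 0 := constFun hy'
  have hyl : ∀ t, y t = y 0 + y' 0 * t := by
    have hd : ∀ t, HasDerivAt (fun t => y t - y' 0 * t) 0 t := by
      intro t
      have := (hy t).fun_sub ((hasDerivAt_id t).const_mul (y' 0))
      convert this using 1 <;> try first | with_reducible_and_instances rfl | (funext x; rfl)
      rw [hc t]; ring
    intro t
    have h2 := constFun hd t
    simp at h2
    linarith [h2]
  have hφ : ∀ t, u t = u 0 + y 0 * t + y' 0 * t ^ 2 / 2 := by
    have hd : ∀ t, HasDerivAt (fun t => u t - (y 0 * t + y' 0 * t ^ 2 / 2)) 0 t := by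
      intro t
      have hsq : HasDerivAt (fun t : ℝ => t ^ 2) (2 * t) t := by
        simpa [pow_two, two_mul] using (hasDerivAt_id t).fun_mul (hasDerivAt_id t)
      have := (hu t).fun_sub (((hasDerivAt_id t).const_mul (y 0)).fun_add
        ((hsq.const_mul (y' 0)).div_const 2))
      convert this using 1 <;> try first | with_reducible_and_instances rfl | (funext x; rfl)
      rw [hyl t]; ring
    intro t
    have h2 := constFun hd t
    simp at h2
    linarith [h2]
  have hHd : ∀ t, HasDerivAt (fun t => u 0 * t + y 0 * t ^ 2 / 2 + y' 0 * t ^ 3 / 6) (u t) t := by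
    intro t
    have hsq : HasDerivAt (fun t : ℝ => t ^ 2) (2 * t) t := by
      simpa [pow_two, two_mul] using (hasDerivAt_id t).fun_mul (hasDerivAt_id t)
    have hcb : HasDerivAt (fun t : ℝ => t ^ 3) (3 * t ^ 2) t := by
      have h5 := hsq.fun_mul (hasDerivAt_id t)
      have h6 : HasDerivAt (fun t : ℝ => t ^ 2 * t) (3 * t ^ 2) t := by
        convert h5 using 1 <;> try first | with_reducible_and_instances rfl | (funext x; rfl)
        simp [id]; ring
      have h7 : (fun t : ℝ => t ^ 3) = fun t : ℝ => t ^ 2 * t := by funext r; ring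
      rw [h7]; exact h6
    have := (((hasDerivAt_id t).const_mul (u 0)).fun_add ((hsq.const_mul (y 0)).div_const 2)).fun_add
      ((hcb.const_mul (y' 0)).div_const 6)
    convert this using 1 <;> try first | with_reducible_and_instances rfl | (funext x; rfl)
    rw [hφ t]; ring
  rw [my_ftc (cont_of_deriv hu) hHd s (s + ω)]
  ring

private lemma hd_matmul {B : Matrix (Fin 3) (Fin 3) ℝ} {M M' : ℝ → Matrix (Fin 3) (Fin 3) ℝ}
    (h : ∀ (s : ℝ) (i j : Fin 3), HasDerivAt (fun t => M t i j) (M' s i j) s)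
    (s : ℝ) (i j : Fin 3) :
    HasDerivAt (fun t => (B * M t) i j) ((B * M' s) i j) s := by
  simp only [Matrix.mul_apply]
  exact HasDerivAt.fun_sum fun k _ => (h s k j).const_mul (B i k)

private lemma row_zero {M : Matrix (Fin 3) (Fin 3) ℝ} (hM : IsUnit M)
    {N : Matrix (Fin 3) (Fin 3) ℝ} (h : ∀ j, (N * M) 0 j = 0) : ∀ j, N 0 j = 0 := by
  intro j
  have hdet : IsUnit M.det := (Matrix.isUnit_iff_isUnit_det M).mp hM
  have hN : N = N * M * M⁻¹ := by
    rw [Matrix.mul_assoc, Matrix.mul_nonsing_inv _ hdet, Matrix.mul_one]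
  rw [hN, Matrix.mul_apply]
  exact Finset.sum_eq_zero fun k _ => by rw [h k, zero_mul]

private lemma det_contra {M : Matrix (Fin 3) (Fin 3) ℝ} (hM : IsUnit M)
    (h : ∀ j, M 0 j = 0) : False := by
  have hdet : IsUnit M.det := (Matrix.isUnit_iff_isUnit_det M).mp hM
  rw [Matrix.det_eq_zero_of_row_eq_zero 0 h] at hdet
  simp at hdet

/-- Closedness criterion for a curve with constant Darboux curvatures on a timelike surface in
Minkowski 3-space: with `F' = A·F` (Darboux frame), `F(0)` invertible, `x' = T =` first row of
`F`, the curve `x` is ω-periodic iff `τ_g = 0`, `ε k_n² − k_g² > 0`, and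
`√(ε k_n² − k_g²) = 2kπ/ω` for some positive integer `k`. -/
theorem stmt_11 (kg kn τg ε : ℝ) (hε : ε = 1 ∨ ε = -1)
    (A : Matrix (Fin 3) (Fin 3) ℝ)
    (hA : A = !![0, kg, -ε * kn; kg, 0, ε * τg; kn, τg, 0])
    (ω : ℝ) (hω : 0 < ω)
    (F : ℝ → Matrix (Fin 3) (Fin 3) ℝ)
    (hF : ∀ s i j, HasDerivAt (fun t => F t i j) ((A * F s) i j) s)
    (hF0 : IsUnit (F 0))
    (x : ℝ → Fin 3 → ℝ)
    (hx : ∀ s, x s = x 0 + ∫ t in (0:ℝ)..s, F t 0) :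
    (∀ s, x (s + ω) = x s) ↔
      (τg = 0 ∧ 0 < ε * kn ^ 2 - kg ^ 2 ∧
        ∃ k : ℕ, 0 < k ∧ Real.sqrt (ε * kn ^ 2 - kg ^ 2) = 2 * k * Real.pi / ω) := by
  have hεne : ε ≠ 0 := by rcases hε with h | h <;> rw [h] <;> norm_num
  have hωne : ω ≠ 0 := ne_of_gt hω
  have hπ := Real.pi_pos
  have hcont : ∀ (i j : Fin 3), Continuous fun t => F t i j := fun i j =>
    continuous_iff_continuousAt.mpr fun s => (hF s i j).continuousAt
  have hcontP : Continuous fun t => F t 0 := continuous_pi fun j => hcont 0 j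
  have hIntj : ∀ (j : Fin 3) (a b : ℝ), IntervalIntegrable (fun t => F t 0 j) volume a b :=
    fun j a b => (hcont 0 j).intervalIntegrable a b
  have happ : ∀ (a b : ℝ) (j : Fin 3), (∫ t in a..b, F t 0) j = ∫ t in a..b, F t 0 j := by
    intro a b j
    have hInt : IntervalIntegrable (fun t => F t 0) volume a b := hcontP.intervalIntegrable a b
    simpa using
      ((ContinuousLinearMap.proj (R := ℝ) (φ := fun _ : Fin 3 => ℝ) j).intervalIntegral_comp_comm
        hInt).symm
  have key : (∀ s, x (s + ω) = x s) ↔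
      ∀ (s : ℝ) (j : Fin 3), (∫ t in s..(s + ω), F t 0 j) = 0 := by
    constructor
    · intro h s j
      have h1 := h s
      rw [hx (s + ω), hx s] at h1
      have h2 : (∫ t in (0:ℝ)..(s + ω), F t 0) = ∫ t in (0:ℝ)..s, F t 0 := add_left_cancel h1
      have h3 := congrFun h2 j
      rw [happ, happ] at h3
      have h4 := intervalIntegral.integral_interval_sub_left (hIntj j 0 (s + ω)) (hIntj j 0 s)
      rw [h3, sub_self] at h4
      exact h4.symm
    · intro h s
      rw [hx (s + ω), hx s]
      congr 1
      funext j
      rw [happ, happ]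
      have h4 := intervalIntegral.integral_interval_sub_left (hIntj j 0 (s + ω)) (hIntj j 0 s)
      rw [h s j] at h4
      linarith [h4]
  rw [key]
  have hD1 : ∀ (s : ℝ) (i j : Fin 3), HasDerivAt (fun t => (A * F t) i j) ((A * (A * F s)) i j) s :=
    fun s i j => hd_matmul hF s i j
  set m := ε * kn ^ 2 - kg ^ 2 - ε * τg ^ 2 with hmdef
  have hA3 : A * A * A = (-m) • A := by
    rw [hmdef, hA]
    ext i j
    fin_cases i <;> fin_cases j <;>
      simp [Matrix.mul_apply, Fin.sum_univ_three] <;> ring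
  have hD2 : ∀ (s : ℝ) (i j : Fin 3),
      HasDerivAt (fun t => (A * (A * F t)) i j) (-m * ((A * F s) i j)) s := by
    intro s i j
    have h1 := hd_matmul (B := A) hD1 s i j
    have h2 : A * (A * (A * F s)) = (-m) • (A * F s) := by
      rw [← Matrix.mul_assoc, ← Matrix.mul_assoc, hA3, Matrix.smul_mul]
    rw [h2] at h1
    simpa [Matrix.smul_apply, smul_eq_mul] using h1
  constructor
  · intro Hper
    rcases lt_trichotomy 0 m with hm | hm | hm
    · -- m > 0
      set μ := Real.sqrt m with hμdef
      have hμpos : 0 < μ := Real.sqrt_pos.mpr hm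
      have hμ : μ ≠ 0 := ne_of_gt hμpos
      have hμ2 : μ ^ 2 = m := Real.sq_sqrt hm.le
      have hy' : ∀ (j : Fin 3) (t : ℝ),
          HasDerivAt (fun t => (A * (A * F t)) 0 j) (-(μ ^ 2) * ((A * F t) 0 j)) t := by
        intro j t
        rw [hμ2]
        exact hD2 t 0 j
      have hIs : ∀ (j : Fin 3) (s : ℝ), ∫ t in s..(s + ω), F t 0 j =
          (F 0 0 j + (A * (A * F 0)) 0 j / μ ^ 2) * ω
          - ((A * F 0) 0 j / μ ^ 2) * (Real.cos (μ * s + μ * ω) - Real.cos (μ * s))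
          - ((A * (A * F 0)) 0 j / μ ^ 3) * (Real.sin (μ * s + μ * ω) - Real.sin (μ * s)) :=
        fun j s => sol_pos hμpos (fun t => hF t 0 j) (fun t => hD1 t 0 j) (hy' j) s ω
      have h3 : ∀ j : Fin 3, (F 0 0 j + (A * (A * F 0)) 0 j / μ ^ 2) * ω = 0
          ∧ ((A * F 0) 0 j / μ ^ 2) * (1 - Real.cos (μ * ω))
              - ((A * (A * F 0)) 0 j / μ ^ 3) * Real.sin (μ * ω) = 0
          ∧ ((A * F 0) 0 j / μ ^ 2) * Real.sin (μ * ω)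
              + ((A * (A * F 0)) 0 j / μ ^ 3) * (1 - Real.cos (μ * ω)) = 0 := by
        intro j
        refine extract_trig hμ fun s => ?_
        have h4 := (hIs j s).symm.trans (Hper s j)
        rw [Real.cos_add, Real.sin_add] at h4
        linear_combination h4
      have hrow : ∀ j : Fin 3, (μ ^ 2 • (1 : Matrix (Fin 3) (Fin 3) ℝ) + A * A) 0 j = 0 := by
        apply row_zero hF0
        intro j
        have h5 := (h3 j).1
        have hX : F 0 0 j + (A * (A * F 0)) 0 j / μ ^ 2 = 0 :=
          (mul_eq_zero.mp h5).resolve_right hωne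
        have h6 : μ ^ 2 * F 0 0 j + (A * (A * F 0)) 0 j = 0 := by
          field_simp at hX
          linarith [hX]
        have h7 : ((μ ^ 2 • (1 : Matrix (Fin 3) (Fin 3) ℝ) + A * A) * F 0) 0 j
            = μ ^ 2 * F 0 0 j + (A * (A * F 0)) 0 j := by
          rw [Matrix.add_mul, Matrix.smul_mul, Matrix.one_mul, Matrix.mul_assoc]
          simp [Matrix.add_apply, Matrix.smul_apply, smul_eq_mul]
        rw [h7]
        exact h6
      have hN00 : (μ ^ 2 • (1 : Matrix (Fin 3) (Fin 3) ℝ) + A * A) 0 0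
          = μ ^ 2 + (kg ^ 2 - ε * kn ^ 2) := by
        rw [hA]
        simp [Matrix.mul_apply, Fin.sum_univ_three, Matrix.add_apply, Matrix.smul_apply,
          Matrix.one_apply]
        ring
      have hτ : τg = 0 := by
        have h7 := hrow 0
        rw [hN00] at h7
        have h8 : ε * τg ^ 2 = 0 := by
          have h9 := hμ2
          rw [hmdef] at h9
          linarith [h7, h9]
        have := (mul_eq_zero.mp h8).resolve_left hεne
        exact pow_eq_zero_iff (n := 2) (by norm_num) |>.mp this
      have hmeq : m = ε * kn ^ 2 - kg ^ 2 := by rw [hmdef, hτ]; ring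
      have hm' : 0 < ε * kn ^ 2 - kg ^ 2 := hmeq ▸ hm
      refine ⟨hτ, hm', ?_⟩
      set C := Real.cos (μ * ω) with hCdef
      set S := Real.sin (μ * ω) with hSdef
      have hC1 : C = 1 ∧ S = 0 := by
        by_cases hCS : (1 - C) ^ 2 + S ^ 2 = 0
        · constructor <;> nlinarith [sq_nonneg (1 - C), sq_nonneg S]
        · exfalso
          have hb : ∀ j : Fin 3, (A * F 0) 0 j = 0 := by
            intro j
            obtain ⟨-, h9, h10⟩ := h3 j
            have h11 : (A * F 0) 0 j / μ ^ 2 * ((1 - C) ^ 2 + S ^ 2) = 0 := by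
              linear_combination (1 - C) * h9 + S * h10
            have h12 : (A * F 0) 0 j / μ ^ 2 = 0 := (mul_eq_zero.mp h11).resolve_right hCS
            field_simp at h12
            simpa using h12
          have hArow : ∀ j : Fin 3, A 0 j = 0 := row_zero hF0 hb
          have hkg : kg = 0 := by
            have := hArow 1
            rw [hA] at this
            simpa using this
          have hkn : kn = 0 := by
            have := hArow 2
            rw [hA] at this
            simp at this
            rcases this with h | h
            · exact absurd h hεne
            · exact h
          have : μ ^ 2 = 0 := by rw [hμ2, hmeq, hkg, hkn]; ring
          exact hμ (pow_eq_zero_iff (n := 2) (by norm_num) |>.mp this)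
      obtain ⟨n, hn⟩ := (Real.cos_eq_one_iff (μ * ω)).mp hC1.1
      have hμω : 0 < μ * ω := mul_pos hμpos hω
      have hnpos : 0 < n := by
        by_contra h
        push_neg at h
        have hle : (n : ℝ) ≤ 0 := by exact_mod_cast h
        nlinarith [hn]
      refine ⟨n.toNat, by omega, ?_⟩
      rw [eq_div_iff hωne]
      have hsqrt : Real.sqrt (ε * kn ^ 2 - kg ^ 2) = μ := by
        rw [hμdef, hmeq]
      rw [hsqrt]
      have hcast : ((n.toNat : ℕ) : ℝ) = (n : ℝ) := by
        norm_cast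
        omega
      rw [hcast]
      linarith [hn]
    · -- m = 0
      exfalso
      have hy' : ∀ (j : Fin 3) (t : ℝ), HasDerivAt (fun t => (A * (A * F t)) 0 j) 0 t := by
        intro j t
        have h1 := hD2 t 0 j
        rw [← hm] at h1
        simpa using h1
      have ha0 : ∀ j : Fin 3, F 0 0 j = 0 := by
        intro j
        have hIs : ∀ s : ℝ, ∫ t in s..(s + ω), F t 0 j =
            F 0 0 j * ω + (A * F 0) 0 j * ((s + ω) ^ 2 - s ^ 2) / 2
              + (A * (A * F 0)) 0 j * ((s + ω) ^ 3 - s ^ 3) / 6 :=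
          fun s => sol_zero (fun t => hF t 0 j) (fun t => hD1 t 0 j) (hy' j) s ω
        have hq : ∀ s : ℝ,
            (F 0 0 j * ω + (A * F 0) 0 j * ω ^ 2 / 2 + (A * (A * F 0)) 0 j * ω ^ 3 / 6)
            + ((A * F 0) 0 j * ω + (A * (A * F 0)) 0 j * ω ^ 2 / 2) * s
            + ((A * (A * F 0)) 0 j * ω / 2) * s ^ 2 = 0 := by
          intro s
          have h4 := (hIs s).symm.trans (Hper s j)
          linear_combination h4
        obtain ⟨e1, e2, e3⟩ := extract_quad hq
        have hc : (A * (A * F 0)) 0 j = 0 := by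
          have h5 : (A * (A * F 0)) 0 j * ω = 0 := by linarith [e3]
          exact (mul_eq_zero.mp h5).resolve_right hωne
        have hb : (A * F 0) 0 j = 0 := by
          have h5 : (A * F 0) 0 j * ω = 0 := by
            rw [hc] at e2
            linarith [e2]
          exact (mul_eq_zero.mp h5).resolve_right hωne
        have h5 : F 0 0 j * ω = 0 := by
          rw [hc, hb] at e1
          linarith [e1]
        exact (mul_eq_zero.mp h5).resolve_right hωne
      exact det_contra hF0 ha0
    · -- m < 0
      exfalso
      set μ := Real.sqrt (-m) with hμdef
      have hmpos : 0 < -m := by linarith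
      have hμpos : 0 < μ := Real.sqrt_pos.mpr hmpos
      have hμ2 : μ ^ 2 = -m := Real.sq_sqrt hmpos.le
      have hy' : ∀ (j : Fin 3) (t : ℝ),
          HasDerivAt (fun t => (A * (A * F t)) 0 j) (μ ^ 2 * ((A * F t) 0 j)) t := by
        intro j t
        rw [hμ2]
        exact hD2 t 0 j
      have ha0 : ∀ j : Fin 3, F 0 0 j = 0 := by
        intro j
        obtain ⟨c₁, c₂, hIs⟩ :=
          sol_neg hμpos (fun t => hF t 0 j) (fun t => hD1 t 0 j) (hy' j)
        have hq : ∀ s : ℝ, (F 0 0 j - c₁ / μ + c₂ / μ) * ω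
            + ((c₁ / μ ^ 2) * (Real.exp (μ * ω) - 1)) * Real.exp (μ * s)
            + ((c₂ / μ ^ 2) * (Real.exp (-(μ * ω)) - 1)) * Real.exp (-(μ * s)) = 0 := by
          intro s
          have h4 := (hIs s ω).symm.trans (Hper s j)
          linear_combination h4
        obtain ⟨e1, e2, e3⟩ := extract_exp (ne_of_gt hμpos) hq
        have hexp1 : Real.exp (μ * ω) - 1 ≠ 0 := by
          have h5 : 1 < Real.exp (μ * ω) := by
            rw [← Real.exp_zero]
            exact Real.exp_lt_exp.mpr (mul_pos hμpos hω)
          intro h6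
          linarith [h5]
        have hexp2 : Real.exp (-(μ * ω)) - 1 ≠ 0 := by
          have h5 : Real.exp (-(μ * ω)) < 1 := by
            rw [← Real.exp_zero]
            apply Real.exp_lt_exp.mpr
            nlinarith [mul_pos hμpos hω]
          intro h6
          linarith [h5]
        have hc₁ : c₁ = 0 := by
          have h5 := (mul_eq_zero.mp e2).resolve_right hexp1
          field_simp at h5
          simpa using h5
        have hc₂ : c₂ = 0 := by
          have h5 := (mul_eq_zero.mp e3).resolve_right hexp2
          field_simp at h5
          simpa using h5
        rw [hc₁, hc₂] at e1
        have h5 : F 0 0 j * ω = 0 := by linarith [e1]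
        exact (mul_eq_zero.mp h5).resolve_right hωne
      exact det_contra hF0 ha0
  · rintro ⟨hτ, hm', k, hk, hsq⟩ s j
    have hmeq : m = ε * kn ^ 2 - kg ^ 2 := by rw [hmdef, hτ]; ring
    have hm : 0 < m := hmeq ▸ hm'
    set μ := Real.sqrt m with hμdef
    have hμpos : 0 < μ := Real.sqrt_pos.mpr hm
    have hμ : μ ≠ 0 := ne_of_gt hμpos
    have hμ2 : μ ^ 2 = m := Real.sq_sqrt hm.le
    have hμeq : Real.sqrt (ε * kn ^ 2 - kg ^ 2) = μ := by rw [hμdef, hmeq]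
    rw [hμeq] at hsq
    have hμω : μ * ω = 2 * (k : ℝ) * π := by
      rw [hsq]
      field_simp
    have hy' : ∀ (j : Fin 3) (t : ℝ),
        HasDerivAt (fun t => (A * (A * F t)) 0 j) (-(μ ^ 2) * ((A * F t) 0 j)) t := by
      intro j t
      rw [hμ2]
      exact hD2 t 0 j
    have hIs := sol_pos hμpos (fun t => hF t 0 j) (fun t => hD1 t 0 j) (hy' j) s ω
    have hcos : Real.cos (μ * s + μ * ω) = Real.cos (μ * s) := by
      rw [hμω]
      have h5 : μ * s + 2 * (k : ℝ) * π = μ * s + (k : ℕ) * (2 * π) := by push_cast; ring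
      rw [h5, Real.cos_add_nat_mul_two_pi]
    have hsin : Real.sin (μ * s + μ * ω) = Real.sin (μ * s) := by
      rw [hμω]
      have h5 : μ * s + 2 * (k : ℝ) * π = μ * s + (k : ℕ) * (2 * π) := by push_cast; ring
      rw [h5, Real.sin_add_nat_mul_two_pi]
    have hc : (A * (A * F 0)) 0 j = (kg ^ 2 - ε * kn ^ 2) * F 0 0 j := by
      have h9 : (A * A) 0 0 = kg ^ 2 - ε * kn ^ 2 ∧ (A * A) 0 1 = 0 ∧ (A * A) 0 2 = 0 := by
        rw [hA, hτ]
        refine ⟨?_, ?_, ?_⟩ <;>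
          simp [Matrix.mul_apply, Fin.sum_univ_three, Matrix.vecHead, Matrix.vecTail] <;> ring
      rw [← Matrix.mul_assoc, Matrix.mul_apply, Fin.sum_univ_three, h9.1, h9.2.1, h9.2.2]
      ring
    refine hIs.trans ?_
    rw [hcos, hsin, hc]
    have hμ2' : μ ^ 2 = ε * kn ^ 2 - kg ^ 2 := by rw [hμ2, hmeq]
    have h9 : (kg ^ 2 - ε * kn ^ 2) * F 0 0 j / μ ^ 2 = -F 0 0 j := by
      rw [show kg ^ 2 - ε * kn ^ 2 = -(μ ^ 2) by linarith [hμ2']]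
      field_simp
      try ring
    rw [h9]
    ring
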